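/- Let n ∈ ℕ and let B, C, X, Z be n×n complex matrices such that X² + B·X + C = 0, Z² + B·Z + C = 0, and X − Z is invertible. Then for every λ ∈ ℂ one has λ²·1 + λ·B + C = (X − Z)·(λ·1 − X)·(X − Z)⁻¹·(λ·1 − Z). -/
import Mathlib


/-- If `X`, `Z` form a complete pair of right solvents, then for every `λ ∈ ℂ`,
`λ²·1 + λ·B + C = (X − Z)·(λ·1 − X)·(X − Z)⁻¹·(λ·1 − Z)`. -/
theorem pencil_factor_of_complete_pair (n : ℕ) (B C X Z : Matrix (Fin n) (Fin n) ℂ)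
    (hX : X ^ 2 + B * X + C = 0) (hZ : Z ^ 2 + B * Z + C = 0) (hXZ : IsUnit (X - Z)) :
    ∀ lam : ℂ, (lam ^ 2) • (1 : Matrix (Fin n) (Fin n) ℂ) + lam • B + C =
      (X - Z) * (lam • (1 : Matrix (Fin n) (Fin n) ℂ) - X) * (X - Z)⁻¹ *
        (lam • (1 : Matrix (Fin n) (Fin n) ℂ) - Z) := by
  intro lam
  have hdet : IsUnit (X - Z).det := (Matrix.isUnit_iff_isUnit_det _).mp hXZ
  have hinv : (X - Z) * (X - Z)⁻¹ = 1 := Matrix.mul_nonsing_inv _ hdet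
  have key0 : (X - Z) * X + (B + Z) * (X - Z) = (X ^ 2 + B * X + C) - (Z ^ 2 + B * Z + C) := by
    noncomm_ring
  rw [hX, hZ, sub_zero] at key0
  have key : (X - Z) * (lam • (1 : Matrix (Fin n) (Fin n) ℂ) - X)
      = (lam • (1 : Matrix (Fin n) (Fin n) ℂ) + B + Z) * (X - Z) := by
    have h2 : (X - Z) * (lam • (1 : Matrix (Fin n) (Fin n) ℂ) - X)
        - (lam • (1 : Matrix (Fin n) (Fin n) ℂ) + B + Z) * (X - Z)
        = -((X - Z) * X + (B + Z) * (X - Z)) := by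
      noncomm_ring
      module
    rw [key0, neg_zero, sub_eq_zero] at h2
    exact h2
  rw [key, mul_assoc _ (X - Z), hinv, mul_one]
  have expand : (lam • (1 : Matrix (Fin n) (Fin n) ℂ) + B + Z) *
      (lam • (1 : Matrix (Fin n) (Fin n) ℂ) - Z)
      = (lam ^ 2) • (1 : Matrix (Fin n) (Fin n) ℂ) + lam • B + C - (Z ^ 2 + B * Z + C) := by
    noncomm_ring
    module
  rw [expand, hZ, sub_zero]
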